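/- arXiv:0912.1418 — 8 statements merged into one kernel-verified Lean document; each statement's English description precedes it below -/
import Mathlib

section
/- Let b, c > 0 be real numbers. If x, y > 0 satisfy the parabola equation y·√b = x² and the circle equation y² = x·(c/b − x), then x³ + b·x = c. -/
theorem khayyam_eq13 (b c x y : ℝ) (hb : 0 < b) (hc : 0 < c)
    (hx : 0 < x) (hy : 0 < y)
    (hpar : y * Real.sqrt b = x ^ 2)
    (hcirc : y ^ 2 = x * (c / b - x)) :
    x ^ 3 + b * x = c := by
  have h2 : y ^ 2 * b = x ^ 4 := by
    have := congrArg (· ^ 2) hpar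
    simp only [mul_pow, Real.sq_sqrt hb.le] at this
    linarith [this]
  have hcb : b * (c / b) = c := mul_div_cancel₀ c hb.ne'
  nlinarith [hcirc, h2, mul_pos hx hb]
end

section
/- Let a, b, c > 0. If x, y > 0 satisfy the hyperbola equation √b·(c/b − x) = x·y and the circle equation y² = (x + a)·(c/b − x), then x³ + a·x² + b·x = c. -/
theorem khayyam_eq19 (a b c x y : ℝ) (ha : 0 < a) (hb : 0 < b) (hc : 0 < c)
    (hx : 0 < x) (hy : 0 < y)
    (hhyp : Real.sqrt b * (c / b - x) = x * y)
    (hcirc : y ^ 2 = (x + a) * (c / b - x)) :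
    x ^ 3 + a * x ^ 2 + b * x = c := by
  have hsb : 0 < Real.sqrt b := Real.sqrt_pos.2 hb
  have hpos : 0 < c / b - x := by
    have := mul_pos hx hy
    nlinarith
  have hsq : b * (c / b - x) ^ 2 = x ^ 2 * ((x + a) * (c / b - x)) := by
    have h := congrArg (· ^ 2) hhyp
    simp only [mul_pow] at h
    rw [Real.sq_sqrt hb.le] at h
    rw [← hcirc]; linarith [h]
  have h2 : b * (c / b - x) = x ^ 2 * (x + a) :=
    mul_left_cancel₀ hpos.ne' (by linear_combination hsq)
  have hcb : b * (c / b) = c := by field_simp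
  nlinarith [h2]
end

section
/- Let a, b, c > 0. If x, y > 0 satisfy √b·(x − c/b) = x·y and y² = (x + a)·(x − c/b), then x³ + a·x² + c = b·x. -/
theorem khayyam_eq20 (a b c x y : ℝ) (ha : 0 < a) (hb : 0 < b) (hc : 0 < c)
    (hx : 0 < x) (hy : 0 < y)
    (hhyp1 : Real.sqrt b * (x - c / b) = x * y)
    (hhyp2 : y ^ 2 = (x + a) * (x - c / b)) :
    x ^ 3 + a * x ^ 2 + c = b * x := by
  have hsq : Real.sqrt b ^ 2 = b := Real.sq_sqrt hb.le
  have h1 : b * (x - c/b) ^ 2 = x ^ 2 * ((x + a) * (x - c/b)) := by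
    have := congrArg (· ^ 2) hhyp1
    rw [mul_pow, mul_pow, hsq, hhyp2] at this
    linarith
  have hpos : 0 < x - c/b := by
    rcases lt_trichotomy (x - c/b) 0 with h | h | h
    · nlinarith [Real.sqrt_pos.2 hb]
    · rw [h] at hhyp1; nlinarith [Real.sqrt_pos.2 hb]
    · exact h
  have h2 : b * (x - c/b) = x ^ 2 * (x + a) := by
    have := mul_right_cancel₀ (ne_of_gt hpos)
      (by nlinarith : b * (x - c/b) * (x - c/b) = x ^ 2 * (x + a) * (x - c/b))
    exact this
  have : b * (c/b) = c := mul_div_cancel₀ c hb.ne'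
  nlinarith
end

section
/- Let a, b, c > 0. If x, y > 0 satisfy √b·(x + c/b) = x·y and y² = (x − a)·(x + c/b), then x³ = a·x² + b·x + c. -/
theorem khayyam_eq22 (a b c x y : ℝ) (ha : 0 < a) (hb : 0 < b) (hc : 0 < c)
    (hx : 0 < x) (hy : 0 < y)
    (hhyp1 : Real.sqrt b * (x + c / b) = x * y)
    (hhyp2 : y ^ 2 = (x - a) * (x + c / b)) :
    x ^ 3 = a * x ^ 2 + b * x + c := by
  have hpos : 0 < x + c / b := by positivity
  have hsq : b * (x + c / b) ^ 2 = x ^ 2 * ((x - a) * (x + c / b)) := by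
    have := congrArg (· ^ 2) hhyp1
    rw [mul_pow, Real.sq_sqrt hb.le] at this
    rw [this, ← hhyp2]; ring
  have h2 : b * (x + c / b) = x ^ 2 * (x - a) := by
    have := mul_right_cancel₀ hpos.ne' (by linear_combination hsq :
      (b * (x + c / b)) * (x + c / b) = (x ^ 2 * (x - a)) * (x + c / b))
    exact this
  have hb' : b ≠ 0 := hb.ne'
  field_simp at h2
  nlinarith [h2]
end

section
/- Let a, b, c > 0. If x, y > 0 satisfy √b·(x + c/b) = x·y and y² = (x + a)·(x + c/b), then x³ + a·x² = b·x + c. -/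
theorem khayyam_eq23 (a b c x y : ℝ) (ha : 0 < a) (hb : 0 < b) (hc : 0 < c)
    (hx : 0 < x) (hy : 0 < y)
    (hhyp1 : Real.sqrt b * (x + c / b) = x * y)
    (hhyp2 : y ^ 2 = (x + a) * (x + c / b)) :
    x ^ 3 + a * x ^ 2 = b * x + c := by
  have hd : 0 < x + c / b := by positivity
  have hsq : Real.sqrt b ^ 2 = b := Real.sq_sqrt hb.le
  have h : b * (x + c / b) ^ 2 = x ^ 2 * ((x + a) * (x + c / b)) := by
    have := congrArg (· ^ 2) hhyp1
    simp only [mul_pow] at this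
    rw [hsq] at this
    linear_combination this + x ^ 2 * hhyp2
  have h2 : b * (x + c / b) = x ^ 2 * (x + a) := by
    have := mul_right_cancel₀ hd.ne' (by linear_combination h : b * (x + c / b) * (x + c / b) = x ^ 2 * (x + a) * (x + c / b))
    exact this
  have hbc : b * (c / b) = c := by field_simp
  linear_combination hbc - h2
end

section
/- Let a, b, c > 0. If x, y > 0 satisfy √b·(x − c/b) = x·y and y² = (a − x)·(x − c/b), then x³ + b·x = a·x² + c. -/
theorem khayyam_eq24 (a b c x y : ℝ) (ha : 0 < a) (hb : 0 < b) (hc : 0 < c)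
    (hx : 0 < x) (hy : 0 < y)
    (hhyp : Real.sqrt b * (x - c / b) = x * y)
    (hcirc : y ^ 2 = (a - x) * (x - c / b)) :
    x ^ 3 + b * x = a * x ^ 2 + c := by
  have hsq : b * (x - c / b) ^ 2 = x ^ 2 * ((a - x) * (x - c / b)) := by
    have h := congrArg (· ^ 2) hhyp
    simp only [mul_pow] at h
    rw [Real.sq_sqrt hb.le] at h
    rw [← hcirc]; linear_combination h
  have hne : x - c / b ≠ 0 := by
    intro h
    rw [h, mul_zero] at hhyp
    exact (mul_pos hx hy).ne' hhyp.symm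
  have key := mul_right_cancel₀ hne
    (show (b * (x - c / b)) * (x - c / b) = (x ^ 2 * (a - x)) * (x - c / b) by
      linear_combination hsq)
  have hb' : b ≠ 0 := hb.ne'
  field_simp at key
  nlinarith [key]
end

section
/- Let a, b, c > 0. If x, y > 0 satisfy √b·(x − c/b) = x·y and y² = (x − a)·(x − c/b), then x³ + c = a·x² + b·x. -/
theorem khayyam_eq25 (a b c x y : ℝ) (ha : 0 < a) (hb : 0 < b) (hc : 0 < c)
    (hx : 0 < x) (hy : 0 < y)
    (hhyp1 : Real.sqrt b * (x - c / b) = x * y)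
    (hhyp2 : y ^ 2 = (x - a) * (x - c / b)) :
    x ^ 3 + c = a * x ^ 2 + b * x := by
  have ht : x - c / b ≠ 0 := by
    intro h
    rw [h, mul_zero] at hhyp1
    exact absurd hhyp1.symm (by positivity)
  have hsq : b * (x - c / b) ^ 2 = x ^ 2 * ((x - a) * (x - c / b)) := by
    have : (Real.sqrt b * (x - c / b)) ^ 2 = (x * y) ^ 2 := by rw [hhyp1]
    rw [mul_pow, Real.sq_sqrt hb.le] at this
    rw [this, mul_pow, hhyp2]
  have key : b * (x - c / b) = x ^ 2 * (x - a) := by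
    have := mul_right_cancel₀ ht (by linear_combination hsq :
      (b * (x - c / b)) * (x - c / b) = (x ^ 2 * (x - a)) * (x - c / b))
    exact this
  have hb' : b ≠ 0 := hb.ne'
  field_simp at key
  linarith [key]
end

section
/- For real numbers p, q and nonzero z, z is a root of z³ + p·z + q = 0 if and only if the point (z, z²) is a point other than the origin lying on both the parabola y = z² and the circle centered at (−q/2, (1−p)/2) passing through the origin. -/
theorem descartes_cubic_circle (p q z : ℝ) (hz : z ≠ 0) :
    z ^ 3 + p * z + q = 0 ↔
      ((z, z ^ 2) ≠ ((0 : ℝ), (0 : ℝ)) ∧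
        (z - (-q / 2)) ^ 2 + (z ^ 2 - (1 - p) / 2) ^ 2 =
          (-q / 2) ^ 2 + ((1 - p) / 2) ^ 2) := by
  constructor
  · intro h
    refine ⟨fun hc => hz (by simpa using congrArg Prod.fst hc), ?_⟩
    have : z * (z ^ 3 + p * z + q) = 0 := by rw [h]; ring
    nlinarith [this]
  · rintro ⟨-, h⟩
    have h4 : z ^ 4 + p * z ^ 2 + q * z = 0 := by nlinarith [h]
    have : z * (z ^ 3 + p * z + q) = 0 := by linarith [h4, show z * (z ^ 3 + p * z + q) = z ^ 4 + p * z ^ 2 + q * z from by ring]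
    rcases mul_eq_zero.mp this with h' | h'
    · exact absurd h' hz
    · exact h'
end
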